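/- (Exponential stability implies exponential incremental stability.) Suppose f satisfies the local behavior assumptions and the system x_{k+1} = f(k, x_k) is uniformly exponentially stable in D, i.e. there exist d > 0 and λ ∈ (0,1) such that every solution with x_{k₀} = ξ ∈ D satisfies ‖x_k‖ ≤ d‖ξ‖λ^{k−k₀} for all k ≥ k₀. Then the system is uniformly exponentially incrementally stable in D: there exist d' > 0 and ρ ∈ (0,1) such that any two solutions x, y from initial states ξ, ζ ∈ D at a common initial time k₀ satisfy ‖x_k − y_k‖ ≤ d' ‖ξ − ζ‖ ρ^{k−k₀} for all k ≥ k₀. -/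

import Mathlib

open Metric

set_option linter.unusedSectionVars false

section Aux

variable {E : Type*} [NormedAddCommGroup E] [NormedSpace ℝ E]

/-- iterated flow of the nonautonomous system -/
def dflow (f : ℕ → E → E) (k₀ : ℕ) : ℕ → E → E
  | 0 => id
  | (m+1) => fun ξ => f (k₀ + m) (dflow f k₀ m ξ)

/-- product of Jacobians along a trajectory -/
noncomputable def dprod (f : ℕ → E → E) (J : ℕ → E → (E →L[ℝ] E)) (k₀ : ℕ) :
    ℕ → E → (E →L[ℝ] E)
  | 0, _ => ContinuousLinearMap.id ℝ E
  | (m+1), ξ => (J (k₀ + m) (dflow f k₀ m ξ)).comp (dprod f J k₀ m ξ)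

lemma dflow_zero (f : ℕ → E → E) (k₀ : ℕ) (ξ : E) : dflow f k₀ 0 ξ = ξ := rfl

lemma dflow_succ (f : ℕ → E → E) (k₀ m : ℕ) (ξ : E) :
    dflow f k₀ (m+1) ξ = f (k₀ + m) (dflow f k₀ m ξ) := rfl

lemma dflow_add (f : ℕ → E → E) (k₀ a b : ℕ) (ξ : E) :
    dflow f k₀ (a + b) ξ = dflow f (k₀ + a) b (dflow f k₀ a ξ) := by
  induction b with
  | zero => rfl
  | succ b ih =>
      have : a + (b + 1) = (a + b) + 1 := by omega
      rw [this, dflow_succ, dflow_succ, ih]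
      congr 1
      omega

lemma sol_eq_dflow (f : ℕ → E → E) (x : ℕ → E) (k₀ : ℕ)
    (hx : ∀ k, k₀ ≤ k → x (k + 1) = f k (x k)) (m : ℕ) :
    x (k₀ + m) = dflow f k₀ m (x k₀) := by
  induction m with
  | zero => rfl
  | succ m ih =>
      have : k₀ + (m + 1) = (k₀ + m) + 1 := rfl
      rw [this, hx (k₀ + m) (by omega), ih, dflow_succ]

lemma dflow_mem {D : Set E} (f : ℕ → E → E) (hinv : ∀ k, ∀ x ∈ D, f k x ∈ D)
    {ξ : E} (hξ : ξ ∈ D) (k₀ m : ℕ) : dflow f k₀ m ξ ∈ D := by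
  induction m with
  | zero => exact hξ
  | succ m ih => exact hinv _ _ ih

lemma dflow_zero_pt (f : ℕ → E → E) (hf0 : ∀ k, f k 0 = 0) (k₀ m : ℕ) :
    dflow f k₀ m (0 : E) = 0 := by
  induction m with
  | zero => rfl
  | succ m ih => rw [dflow_succ, ih, hf0]

lemma dflow_lip {D : Set E} (f : ℕ → E → E) {Lf : ℝ} (hLf : 0 < Lf)
    (hinv : ∀ k, ∀ x ∈ D, f k x ∈ D)
    (hLip : ∀ k, ∀ p ∈ D, ∀ q ∈ D, ‖f k p - f k q‖ ≤ Lf * ‖p - q‖)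
    {p q : E} (hp : p ∈ D) (hq : q ∈ D) (k₀ m : ℕ) :
    ‖dflow f k₀ m p - dflow f k₀ m q‖ ≤ Lf ^ m * ‖p - q‖ := by
  induction m with
  | zero => simp [dflow_zero]
  | succ m ih =>
      rw [dflow_succ, dflow_succ]
      calc ‖f (k₀ + m) (dflow f k₀ m p) - f (k₀ + m) (dflow f k₀ m q)‖
          ≤ Lf * ‖dflow f k₀ m p - dflow f k₀ m q‖ :=
            hLip _ _ (dflow_mem f hinv hp k₀ m) _ (dflow_mem f hinv hq k₀ m)
        _ ≤ Lf * (Lf ^ m * ‖p - q‖) := by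
            exact mul_le_mul_of_nonneg_left ih hLf.le
        _ = Lf ^ (m + 1) * ‖p - q‖ := by ring

lemma dflow_hasFDerivAt (f : ℕ → E → E) (J : ℕ → E → (E →L[ℝ] E)) {r₀ : ℝ}
    (hJ : ∀ k, ∀ x ∈ Metric.ball (0 : E) r₀, HasFDerivAt (f k) (J k x) x)
    {ξ : E} (k₀ : ℕ) (h : ∀ i, dflow f k₀ i ξ ∈ Metric.ball (0 : E) r₀) (m : ℕ) :
    HasFDerivAt (dflow f k₀ m) (dprod f J k₀ m ξ) ξ := by
  induction m with
  | zero => exact hasFDerivAt_id ξ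
  | succ m ih =>
      have := (hJ (k₀ + m) _ (h m)).comp ξ ih
      exact this

lemma dprod_norm (f : ℕ → E → E) (J : ℕ → E → (E →L[ℝ] E)) {r₀ Abar : ℝ}
    (hJbound : ∀ k, ∀ x ∈ Metric.ball (0 : E) r₀, ‖J k x‖ ≤ Abar)
    {ξ : E} (k₀ : ℕ) (h : ∀ i, dflow f k₀ i ξ ∈ Metric.ball (0 : E) r₀) (m : ℕ) :
    ‖dprod f J k₀ m ξ‖ ≤ (max Abar 1) ^ m := by
  induction m with
  | zero =>
      simp only [dprod, pow_zero]
      exact ContinuousLinearMap.norm_id_le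
  | succ m ih =>
      calc ‖(J (k₀ + m) (dflow f k₀ m ξ)).comp (dprod f J k₀ m ξ)‖
          ≤ ‖J (k₀ + m) (dflow f k₀ m ξ)‖ * ‖dprod f J k₀ m ξ‖ :=
            ContinuousLinearMap.opNorm_comp_le _ _
        _ ≤ (max Abar 1) * (max Abar 1) ^ m := by
            apply mul_le_mul ((hJbound _ _ (h m)).trans (le_max_left _ _)) ih
              (norm_nonneg _) (by positivity)
        _ = (max Abar 1) ^ (m + 1) := by ring

end Aux

section Aux2

variable {E : Type*} [NormedAddCommGroup E] [NormedSpace ℝ E]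

lemma dprod_lip0 {D : Set E} (f : ℕ → E → E) (J : ℕ → E → (E →L[ℝ] E))
    {r₀ Abar LJ Lf : ℝ} (hLf : 0 < Lf) (hLJ : 0 < LJ)
    (hinv : ∀ k, ∀ x ∈ D, f k x ∈ D) (hf0 : ∀ k, f k 0 = 0)
    (hLip : ∀ k, ∀ p ∈ D, ∀ q ∈ D, ‖f k p - f k q‖ ≤ Lf * ‖p - q‖)
    (hball : Metric.ball (0 : E) r₀ ⊆ D)
    (hJbound : ∀ k, ∀ x ∈ Metric.ball (0 : E) r₀, ‖J k x‖ ≤ Abar)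
    (hJLip : ∀ k, ∀ x ∈ Metric.ball (0 : E) r₀, ∀ y ∈ Metric.ball (0 : E) r₀,
      ‖J k x - J k y‖ ≤ LJ * ‖x - y‖)
    {ξ : E} (k₀ : ℕ) (h : ∀ i, dflow f k₀ i ξ ∈ Metric.ball (0 : E) r₀) (m : ℕ) :
    ‖dprod f J k₀ m ξ - dprod f J k₀ m 0‖ ≤
      (m : ℝ) * LJ * (max Abar 1) ^ m * (max Lf 1) ^ m * ‖ξ‖ := by
  have h0ball : (0 : E) ∈ Metric.ball (0 : E) r₀ := by
    have := h 0
    rw [dflow_zero] at this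
    exact Metric.mem_ball_self (by
      have := Metric.mem_ball.mp this
      have h2 := dist_nonneg (x := ξ) (y := (0:E))
      linarith)
  have h0 : ∀ i, dflow f k₀ i (0 : E) ∈ Metric.ball (0 : E) r₀ := by
    intro i; rw [dflow_zero_pt f hf0]; exact h0ball
  have hξD : ξ ∈ D := hball (h 0)
  have hA1 : (1 : ℝ) ≤ max Abar 1 := le_max_right _ _
  have hL1 : (1 : ℝ) ≤ max Lf 1 := le_max_right _ _
  induction m with
  | zero => simp [dprod]
  | succ m ih =>
      set A1 := max Abar 1
      set L := max Lf 1
      have hPn : ‖dprod f J k₀ m ξ‖ ≤ A1 ^ m := dprod_norm f J hJbound k₀ h m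
      have hFm : ‖dflow f k₀ m ξ‖ ≤ L ^ m * ‖ξ‖ := by
        have := dflow_lip f hLf hinv hLip hξD (hball h0ball) k₀ m
        rw [dflow_zero_pt f hf0, sub_zero, sub_zero] at this
        exact this.trans (by
          apply mul_le_mul_of_nonneg_right _ (norm_nonneg _)
          exact pow_le_pow_left₀ hLf.le (le_max_left _ _) m)
      have key : dprod f J k₀ (m+1) ξ - dprod f J k₀ (m+1) 0 =
          (J (k₀ + m) (dflow f k₀ m ξ) - J (k₀ + m) (dflow f k₀ m 0)).comp
            (dprod f J k₀ m ξ)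
          + (J (k₀ + m) (dflow f k₀ m 0)).comp
            (dprod f J k₀ m ξ - dprod f J k₀ m 0) := by
        simp only [dprod]
        ext v
        simp only [ContinuousLinearMap.comp_apply, ContinuousLinearMap.sub_apply,
          ContinuousLinearMap.add_apply, map_sub]
        abel
      have hJd : ‖J (k₀ + m) (dflow f k₀ m ξ) - J (k₀ + m) (dflow f k₀ m 0)‖ ≤
          LJ * (L ^ m * ‖ξ‖) := by
        refine (hJLip _ _ (h m) _ (h0 m)).trans ?_
        apply mul_le_mul_of_nonneg_left _ hLJ.le
        rw [dflow_zero_pt f hf0, sub_zero]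
        exact hFm
      have hJb : ‖J (k₀ + m) (dflow f k₀ m 0)‖ ≤ A1 :=
        (hJbound _ _ (h0 m)).trans (le_max_left _ _)
      calc ‖dprod f J k₀ (m+1) ξ - dprod f J k₀ (m+1) 0‖
          ≤ ‖(J (k₀ + m) (dflow f k₀ m ξ) - J (k₀ + m) (dflow f k₀ m 0)).comp
              (dprod f J k₀ m ξ)‖
            + ‖(J (k₀ + m) (dflow f k₀ m 0)).comp
              (dprod f J k₀ m ξ - dprod f J k₀ m 0)‖ := by
            rw [key]; exact norm_add_le _ _
        _ ≤ (LJ * (L ^ m * ‖ξ‖)) * A1 ^ m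
            + A1 * ((m : ℝ) * LJ * A1 ^ m * L ^ m * ‖ξ‖) := by
            gcongr
            · exact (ContinuousLinearMap.opNorm_comp_le _ _).trans
                (mul_le_mul hJd hPn (norm_nonneg _) (by positivity))
            · exact (ContinuousLinearMap.opNorm_comp_le _ _).trans
                (mul_le_mul hJb ih (norm_nonneg _) (by positivity))
        _ ≤ ((m : ℝ) + 1) * LJ * A1 ^ (m+1) * L ^ (m+1) * ‖ξ‖ := by
            have h1 : (0:ℝ) ≤ ‖ξ‖ := norm_nonneg _
            have h2 : (0:ℝ) < A1 ^ m := by positivity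
            have h3 : (0:ℝ) < L ^ m := by positivity
            have h4 : (0:ℝ) ≤ (m:ℝ) := Nat.cast_nonneg m
            have hA0 : (0:ℝ) < A1 := lt_of_lt_of_le one_pos hA1
            have hL0 : (0:ℝ) < L := lt_of_lt_of_le one_pos hL1
            have hAL : (1:ℝ) ≤ A1 * L := by nlinarith
            have e1 : LJ * (L ^ m * ‖ξ‖) * A1 ^ m
                ≤ LJ * (A1 ^ m * A1) * (L ^ m * L) * ‖ξ‖ := by
              have := mul_le_mul_of_nonneg_left hAL
                (a := LJ * A1 ^ m * L ^ m * ‖ξ‖) (by positivity)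
              calc LJ * (L ^ m * ‖ξ‖) * A1 ^ m
                  = LJ * A1 ^ m * L ^ m * ‖ξ‖ * 1 := by ring
                _ ≤ LJ * A1 ^ m * L ^ m * ‖ξ‖ * (A1 * L) := this
                _ = LJ * (A1 ^ m * A1) * (L ^ m * L) * ‖ξ‖ := by ring
            have e2 : A1 * ((m : ℝ) * LJ * A1 ^ m * L ^ m * ‖ξ‖)
                ≤ (m : ℝ) * (LJ * (A1 ^ m * A1) * (L ^ m * L) * ‖ξ‖) := by
              have := mul_le_mul_of_nonneg_left hL1
                (a := (m : ℝ) * LJ * A1 ^ m * A1 * L ^ m * ‖ξ‖) (by positivity)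
              calc A1 * ((m : ℝ) * LJ * A1 ^ m * L ^ m * ‖ξ‖)
                  = (m : ℝ) * LJ * A1 ^ m * A1 * L ^ m * ‖ξ‖ * 1 := by ring
                _ ≤ (m : ℝ) * LJ * A1 ^ m * A1 * L ^ m * ‖ξ‖ * L := this
                _ = (m : ℝ) * (LJ * (A1 ^ m * A1) * (L ^ m * L) * ‖ξ‖) := by ring
            rw [pow_succ, pow_succ]
            linarith
        _ = ((m : ℕ) + 1 : ℕ) * LJ * A1 ^ (m+1) * L ^ (m+1) * ‖ξ‖ := by
            push_cast; ring

end Aux2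
set_option maxHeartbeats 1000000 in
theorem es_implies_eis
    (n : ℕ) (D : Set (EuclideanSpace ℝ (Fin n)))
    (f : ℕ → EuclideanSpace ℝ (Fin n) → EuclideanSpace ℝ (Fin n))
    (Lf d lam r₀ Abar LJ : ℝ)
    (J : ℕ → EuclideanSpace ℝ (Fin n) →
      (EuclideanSpace ℝ (Fin n) →L[ℝ] EuclideanSpace ℝ (Fin n)))
    (hD : IsCompact D) (h0D : (0 : EuclideanSpace ℝ (Fin n)) ∈ D)
    (hinv : ∀ k, ∀ x ∈ D, f k x ∈ D)
    (hf0 : ∀ k, f k 0 = 0)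
    (hLf : 0 < Lf)
    (hLip : ∀ k, ∀ p ∈ D, ∀ q ∈ D, ‖f k p - f k q‖ ≤ Lf * ‖p - q‖)
    (hr₀ : 0 < r₀)
    (hball : Metric.ball (0 : EuclideanSpace ℝ (Fin n)) r₀ ⊆ D)
    (hJ : ∀ k, ∀ x ∈ Metric.ball (0 : EuclideanSpace ℝ (Fin n)) r₀,
      HasFDerivAt (f k) (J k x) x)
    (hAbar : 0 < Abar) (hLJ : 0 < LJ)
    (hJbound : ∀ k, ∀ x ∈ Metric.ball (0 : EuclideanSpace ℝ (Fin n)) r₀,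
      ‖J k x‖ ≤ Abar)
    (hJLip : ∀ k, ∀ x ∈ Metric.ball (0 : EuclideanSpace ℝ (Fin n)) r₀,
      ∀ y ∈ Metric.ball (0 : EuclideanSpace ℝ (Fin n)) r₀,
      ‖J k x - J k y‖ ≤ LJ * ‖x - y‖)
    (hd : 0 < d) (hlam : 0 < lam ∧ lam < 1)
    (hES : ∀ (k₀ : ℕ) (x : ℕ → EuclideanSpace ℝ (Fin n)), x k₀ ∈ D →
      (∀ k, k₀ ≤ k → x (k + 1) = f k (x k)) →
      ∀ k, k₀ ≤ k → ‖x k‖ ≤ d * ‖x k₀‖ * lam ^ (k - k₀)) :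
    ∃ d' ρ : ℝ, 0 < d' ∧ 0 < ρ ∧ ρ < 1 ∧
      ∀ (k₀ : ℕ) (x y : ℕ → EuclideanSpace ℝ (Fin n)),
        x k₀ ∈ D → y k₀ ∈ D →
        (∀ k, k₀ ≤ k → x (k + 1) = f k (x k)) →
        (∀ k, k₀ ≤ k → y (k + 1) = f k (y k)) →
        ∀ k, k₀ ≤ k → ‖x k - y k‖ ≤ d' * ‖x k₀ - y k₀‖ * ρ ^ (k - k₀) := by
  obtain ⟨hlam0, hlam1⟩ := hlam
  set dt : ℝ := max d 1 with hdtdef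
  have hdt1 : (1 : ℝ) ≤ dt := le_max_right _ _
  have hdt0 : (0 : ℝ) < dt := lt_of_lt_of_le one_pos hdt1
  -- exponential stability in terms of the flow
  have hESf : ∀ k₀ m (ξ : EuclideanSpace ℝ (Fin n)), ξ ∈ D →
      ‖dflow f k₀ m ξ‖ ≤ dt * ‖ξ‖ * lam ^ m := by
    intro k₀ m ξ hξ
    set x : ℕ → EuclideanSpace ℝ (Fin n) :=
      fun k => if k₀ ≤ k then dflow f k₀ (k - k₀) ξ else ξ with hxdef
    have hx0 : x k₀ = ξ := by simp [hxdef, dflow_zero]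
    have hrec : ∀ k, k₀ ≤ k → x (k + 1) = f k (x k) := by
      intro k hk
      have h1 : k₀ ≤ k + 1 := by omega
      have h2 : k + 1 - k₀ = (k - k₀) + 1 := by omega
      have h3 : k₀ + (k - k₀) = k := by omega
      simp only [hxdef]
      rw [if_pos h1, if_pos hk, h2, dflow_succ, h3]
    have := hES k₀ x (by rw [hx0]; exact hξ) hrec (k₀ + m) (by omega)
    have hxk : x (k₀ + m) = dflow f k₀ m ξ := by
      simp only [hxdef, if_pos (Nat.le_add_right k₀ m)]
      congr 1
      omega
    rw [hxk, hx0] at this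
    simp only [Nat.add_sub_cancel_left] at this
    calc ‖dflow f k₀ m ξ‖ ≤ d * ‖ξ‖ * lam ^ m := this
      _ ≤ dt * ‖ξ‖ * lam ^ m := by
          gcongr
          exact le_max_left _ _
  -- bound on the product of Jacobians at the origin
  have hΦ0 : ∀ k₀ m (v : EuclideanSpace ℝ (Fin n)),
      ‖dprod f J k₀ m 0 v‖ ≤ dt * lam ^ m * ‖v‖ := by
    intro k₀ m v
    have h0iter : ∀ i, dflow f k₀ i (0 : EuclideanSpace ℝ (Fin n)) ∈
        Metric.ball (0 : EuclideanSpace ℝ (Fin n)) r₀ := by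
      intro i
      rw [dflow_zero_pt f hf0]
      exact Metric.mem_ball_self hr₀
    have hF : HasFDerivAt (dflow f k₀ m) (dprod f J k₀ m 0) 0 :=
      dflow_hasFDerivAt f J hJ k₀ h0iter m
    rcases eq_or_ne v 0 with rfl | hv
    · simp
    have hvpos : (0:ℝ) < ‖v‖ := norm_pos_iff.mpr hv
    rw [hasFDerivAt_iff_isLittleO_nhds_zero] at hF
    refine le_of_forall_pos_le_add ?_
    intro ε hε
    have hε' : (0:ℝ) < ε / ‖v‖ := div_pos hε hvpos
    have hev := hF.def hε'
    rw [Metric.eventually_nhds_iff] at hev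
    obtain ⟨δ₁, hδ₁, hsmall⟩ := hev
    set t : ℝ := min (δ₁ / (2 * ‖v‖)) (r₀ / (2 * ‖v‖)) with htdef
    have ht0 : 0 < t := by positivity
    have htv : ‖t • v‖ = t * ‖v‖ := by
      rw [norm_smul, Real.norm_eq_abs, abs_of_pos ht0]
    have htv1 : ‖t • v‖ < δ₁ := by
      rw [htv]
      calc t * ‖v‖ ≤ (δ₁ / (2 * ‖v‖)) * ‖v‖ := by
            gcongr
            exact min_le_left _ _
        _ = δ₁ / 2 := by field_simp
        _ < δ₁ := by linarith
    have htv2 : ‖t • v‖ < r₀ := by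
      rw [htv]
      calc t * ‖v‖ ≤ (r₀ / (2 * ‖v‖)) * ‖v‖ := by
            gcongr
            exact min_le_right _ _
        _ = r₀ / 2 := by field_simp
        _ < r₀ := by linarith
    have hkey := hsmall (y := t • v) (by rw [dist_zero_right]; exact htv1)
    simp only [zero_add, dflow_zero_pt f hf0, sub_zero] at hkey
    have hFb : ‖dflow f k₀ m (t • v)‖ ≤ dt * ‖t • v‖ * lam ^ m :=
      hESf k₀ m _ (hball (mem_ball_zero_iff.mpr htv2))
    have hsum : ‖dprod f J k₀ m 0 (t • v)‖
        ≤ dt * ‖t • v‖ * lam ^ m + ε / ‖v‖ * ‖t • v‖ := by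
      calc ‖dprod f J k₀ m 0 (t • v)‖
          ≤ ‖dflow f k₀ m (t • v)‖
            + ‖dflow f k₀ m (t • v) - dprod f J k₀ m 0 (t • v)‖ := by
            have heq : dprod f J k₀ m 0 (t • v) = dflow f k₀ m (t • v)
                - (dflow f k₀ m (t • v) - dprod f J k₀ m 0 (t • v)) := by abel
            conv_lhs => rw [heq]
            exact norm_sub_le _ _
        _ ≤ dt * ‖t • v‖ * lam ^ m + ε / ‖v‖ * ‖t • v‖ := add_le_add hFb hkey
    rw [map_smul, norm_smul, Real.norm_eq_abs, abs_of_pos ht0, htv] at hsum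
    have hfin : t * ‖dprod f J k₀ m 0 v‖ ≤ t * (dt * lam ^ m * ‖v‖ + ε) := by
      calc t * ‖dprod f J k₀ m 0 v‖
          ≤ dt * (t * ‖v‖) * lam ^ m + ε / ‖v‖ * (t * ‖v‖) := hsum
        _ = t * (dt * lam ^ m * ‖v‖ + ε) := by field_simp
    have := (mul_le_mul_iff_right₀ ht0).mp hfin
    linarith
  -- constants
  set A1 : ℝ := max Abar 1 with hA1def
  have hA1 : (1:ℝ) ≤ A1 := le_max_right _ _
  set L : ℝ := max Lf 1 with hLdef
  have hL1 : (1:ℝ) ≤ L := le_max_right _ _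
  have hL0 : (0:ℝ) < L := lt_of_lt_of_le one_pos hL1
  obtain ⟨N, hN1, hNc⟩ : ∃ N : ℕ, 1 ≤ N ∧ dt * lam ^ N ≤ 1 / 4 := by
    obtain ⟨N₀, hN₀⟩ := exists_pow_lt_of_lt_one (x := 1 / (4 * dt)) (by positivity) hlam1
    refine ⟨N₀ + 1, by omega, ?_⟩
    have hlamN : lam ^ (N₀ + 1) ≤ lam ^ N₀ :=
      pow_le_pow_of_le_one hlam0.le hlam1.le (by omega)
    have h1 : dt * lam ^ (N₀ + 1) ≤ dt * lam ^ N₀ := by gcongr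
    have h2 : dt * lam ^ N₀ < dt * (1 / (4 * dt)) :=
      (mul_lt_mul_iff_right₀ hdt0).mpr hN₀
    have h3 : dt * (1 / (4 * dt)) = 1 / 4 := by field_simp
    linarith
  set CN : ℝ := (N : ℝ) * LJ * A1 ^ N * L ^ N with hCNdef
  have hCN : 0 < CN := by
    have : (0:ℝ) < (N : ℝ) := by positivity
    positivity
  set δ : ℝ := min (r₀ / (2 * dt)) (1 / (4 * CN)) with hδdef
  have hδ0 : 0 < δ := by positivity
  have hδr : dt * δ ≤ r₀ / 2 := by
    have : δ ≤ r₀ / (2 * dt) := min_le_left _ _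
    calc dt * δ ≤ dt * (r₀ / (2 * dt)) := by gcongr
      _ = r₀ / 2 := by field_simp
  have hδC : CN * δ ≤ 1 / 4 := by
    have : δ ≤ 1 / (4 * CN) := min_le_right _ _
    calc CN * δ ≤ CN * (1 / (4 * CN)) := by gcongr
      _ = 1 / 4 := by field_simp
  have hδr₀ : δ < r₀ := by nlinarith
  have hballδ : Metric.ball (0 : EuclideanSpace ℝ (Fin n)) δ ⊆ D := by
    intro x hx
    exact hball (mem_ball_zero_iff.mpr
      (lt_trans (mem_ball_zero_iff.mp hx) hδr₀))
  -- trajectories starting in the δ-ball stay in the r₀-ball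
  have hstay : ∀ k (ξ : EuclideanSpace ℝ (Fin n)), ξ ∈ Metric.ball (0:EuclideanSpace ℝ (Fin n)) δ →
      ∀ i, dflow f k i ξ ∈ Metric.ball (0:EuclideanSpace ℝ (Fin n)) r₀ := by
    intro k ξ hξ i
    rw [mem_ball_zero_iff]
    have hξδ : ‖ξ‖ < δ := mem_ball_zero_iff.mp hξ
    have hlami : lam ^ i ≤ 1 := pow_le_one₀ hlam0.le hlam1.le
    calc ‖dflow f k i ξ‖ ≤ dt * ‖ξ‖ * lam ^ i := hESf k i ξ (hballδ hξ)
      _ ≤ dt * ‖ξ‖ * 1 := by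
          have : (0:ℝ) ≤ dt * ‖ξ‖ := by positivity
          gcongr
      _ = dt * ‖ξ‖ := mul_one _
      _ < dt * δ := by gcongr
      _ ≤ r₀ / 2 := hδr
      _ < r₀ := by linarith
  -- one-block contraction
  have hcontract : ∀ k (ξ : EuclideanSpace ℝ (Fin n)), ξ ∈ Metric.ball (0:EuclideanSpace ℝ (Fin n)) δ →
      ∀ ζ ∈ Metric.ball (0:EuclideanSpace ℝ (Fin n)) δ,
      ‖dflow f k N ξ - dflow f k N ζ‖ ≤ (1/2) * ‖ξ - ζ‖ := by
    intro k ξ hξ ζ hζ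
    have hder : ∀ x ∈ Metric.ball (0:EuclideanSpace ℝ (Fin n)) δ,
        HasFDerivWithinAt (dflow f k N) (dprod f J k N x)
          (Metric.ball (0:EuclideanSpace ℝ (Fin n)) δ) x := by
      intro x hx
      exact (dflow_hasFDerivAt f J hJ k (hstay k x hx) N).hasFDerivWithinAt
    have hbound : ∀ x ∈ Metric.ball (0:EuclideanSpace ℝ (Fin n)) δ,
        ‖dprod f J k N x‖ ≤ 1/2 := by
      intro x hx
      have h1 : ‖dprod f J k N 0‖ ≤ dt * lam ^ N :=
        ContinuousLinearMap.opNorm_le_bound _ (by positivity) (hΦ0 k N)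
      have h2 : ‖dprod f J k N x - dprod f J k N 0‖ ≤ CN * ‖x‖ := by
        have := dprod_lip0 f J hLf hLJ hinv hf0 hLip hball hJbound hJLip k
          (hstay k x hx) N
        calc ‖dprod f J k N x - dprod f J k N 0‖
            ≤ (N : ℝ) * LJ * A1 ^ N * L ^ N * ‖x‖ := this
          _ = CN * ‖x‖ := by rw [hCNdef]
      have h3 : CN * ‖x‖ ≤ CN * δ := by
        have := (mem_ball_zero_iff.mp hx).le
        gcongr
      calc ‖dprod f J k N x‖
          ≤ ‖dprod f J k N 0‖ + ‖dprod f J k N x - dprod f J k N 0‖ := by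
            have heq : dprod f J k N x = dprod f J k N 0
                + (dprod f J k N x - dprod f J k N 0) := by abel
            conv_lhs => rw [heq]
            exact norm_add_le _ _
        _ ≤ dt * lam ^ N + CN * δ := by
            have := h2.trans h3
            linarith
        _ ≤ 1/4 + 1/4 := add_le_add hNc hδC
        _ = 1/2 := by norm_num
    exact (convex_ball _ _).norm_image_sub_le_of_norm_hasFDerivWithin_le
      hder hbound hζ hξ
  -- one-block decay
  have hdecay : ∀ k (ξ : EuclideanSpace ℝ (Fin n)), ξ ∈ Metric.ball (0:EuclideanSpace ℝ (Fin n)) δ →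
      dflow f k N ξ ∈ Metric.ball (0:EuclideanSpace ℝ (Fin n)) δ := by
    intro k ξ hξ
    rw [mem_ball_zero_iff]
    have hξδ : ‖ξ‖ < δ := mem_ball_zero_iff.mp hξ
    calc ‖dflow f k N ξ‖ ≤ dt * ‖ξ‖ * lam ^ N := hESf k N ξ (hballδ hξ)
      _ = (dt * lam ^ N) * ‖ξ‖ := by ring
      _ ≤ (1/4) * ‖ξ‖ := by gcongr
      _ ≤ (1/4) * δ := by gcongr
      _ < δ := by linarith
  -- multi-block membership
  have hmem : ∀ k m (ξ : EuclideanSpace ℝ (Fin n)), ξ ∈ Metric.ball (0:EuclideanSpace ℝ (Fin n)) δ →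
      dflow f k (m * N) ξ ∈ Metric.ball (0:EuclideanSpace ℝ (Fin n)) δ := by
    intro k m
    induction m with
    | zero => intro ξ hξ; simpa [dflow_zero] using hξ
    | succ m ih =>
        intro ξ hξ
        have hsplit : (m + 1) * N = m * N + N := by ring
        rw [hsplit, dflow_add]
        exact hdecay _ _ (ih ξ hξ)
  -- multi-block contraction
  have hhalf : ∀ k m (ξ : EuclideanSpace ℝ (Fin n)), ξ ∈ Metric.ball (0:EuclideanSpace ℝ (Fin n)) δ →
      ∀ ζ ∈ Metric.ball (0:EuclideanSpace ℝ (Fin n)) δ,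
      ‖dflow f k (m * N) ξ - dflow f k (m * N) ζ‖ ≤ (1/2) ^ m * ‖ξ - ζ‖ := by
    intro k m
    induction m with
    | zero => intro ξ hξ ζ hζ; simp [dflow_zero]
    | succ m ih =>
        intro ξ hξ ζ hζ
        have hsplit : (m + 1) * N = m * N + N := by ring
        rw [hsplit, dflow_add, dflow_add]
        calc ‖dflow f (k + m * N) N (dflow f k (m * N) ξ)
              - dflow f (k + m * N) N (dflow f k (m * N) ζ)‖
            ≤ (1/2) * ‖dflow f k (m * N) ξ - dflow f k (m * N) ζ‖ :=
              hcontract _ _ (hmem k m ξ hξ) _ (hmem k m ζ hζ)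
          _ ≤ (1/2) * ((1/2) ^ m * ‖ξ - ζ‖) := by
              have := ih ξ hξ ζ hζ
              linarith
          _ = (1/2) ^ (m + 1) * ‖ξ - ζ‖ := by ring
  -- the rate
  set ρ : ℝ := (1/2 : ℝ) ^ ((N : ℝ)⁻¹) with hρdef
  have hρ0 : 0 < ρ := Real.rpow_pos_of_pos (by norm_num) _
  have hρ1 : ρ < 1 := by
    apply Real.rpow_lt_one (by norm_num) (by norm_num)
    have : (0:ℝ) < (N:ℝ) := by exact_mod_cast Nat.pos_of_ne_zero (by omega)
    positivity
  have hρN : ρ ^ N = 1/2 := by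
    rw [hρdef, ← Real.rpow_natCast ((1/2 : ℝ) ^ ((N : ℝ)⁻¹)) N,
      ← Real.rpow_mul (by norm_num : (0:ℝ) ≤ 1/2)]
    rw [inv_mul_cancel₀ (by exact_mod_cast Nat.pos_of_ne_zero (by omega) : (0:ℝ) < (N:ℝ)).ne']
    norm_num
  -- local incremental stability
  have hlocal : ∀ k j (ξ : EuclideanSpace ℝ (Fin n)), ξ ∈ Metric.ball (0:EuclideanSpace ℝ (Fin n)) δ →
      ∀ ζ ∈ Metric.ball (0:EuclideanSpace ℝ (Fin n)) δ,
      ‖dflow f k j ξ - dflow f k j ζ‖ ≤ (2 * L ^ N) * ‖ξ - ζ‖ * ρ ^ j := by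
    intro k j ξ hξ ζ hζ
    set m : ℕ := j / N with hmdef
    set s : ℕ := j % N with hsdef
    have hsN : s < N := Nat.mod_lt _ (by omega)
    have hj : j = m * N + s := by
      rw [hmdef, hsdef, mul_comm]
      exact (Nat.div_add_mod j N).symm
    have hsplit : dflow f k j ξ = dflow f (k + m * N) s (dflow f k (m * N) ξ) := by
      rw [hj, dflow_add]
    have hsplit' : dflow f k j ζ = dflow f (k + m * N) s (dflow f k (m * N) ζ) := by
      rw [hj, dflow_add]
    have hmain : ‖dflow f k j ξ - dflow f k j ζ‖ ≤ L ^ N * ((1/2) ^ m * ‖ξ - ζ‖) := by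
      rw [hsplit, hsplit']
      calc ‖dflow f (k + m * N) s (dflow f k (m * N) ξ)
            - dflow f (k + m * N) s (dflow f k (m * N) ζ)‖
          ≤ Lf ^ s * ‖dflow f k (m * N) ξ - dflow f k (m * N) ζ‖ :=
            dflow_lip f hLf hinv hLip (hballδ (hmem k m ξ hξ))
              (hballδ (hmem k m ζ hζ)) _ s
        _ ≤ L ^ N * ((1/2) ^ m * ‖ξ - ζ‖) := by
            have h1 : Lf ^ s ≤ L ^ s := by
              gcongr
              exact le_max_left _ _
            have h2 : L ^ s ≤ L ^ N := pow_le_pow_right₀ hL1 hsN.le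
            have h3 := hhalf k m ξ hξ ζ hζ
            have h4 : (0:ℝ) ≤ ‖dflow f k (m * N) ξ - dflow f k (m * N) ζ‖ :=
              norm_nonneg _
            have h5 : (0:ℝ) < L ^ N := by positivity
            calc Lf ^ s * ‖dflow f k (m * N) ξ - dflow f k (m * N) ζ‖
                ≤ L ^ N * ‖dflow f k (m * N) ξ - dflow f k (m * N) ζ‖ := by
                  gcongr
                  exact h1.trans h2
              _ ≤ L ^ N * ((1/2) ^ m * ‖ξ - ζ‖) := by gcongr
    have hpow : (1/2 : ℝ) ^ m ≤ 2 * ρ ^ j := by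
      have h1 : ρ ^ ((m + 1) * N) ≤ ρ ^ j := by
        apply pow_le_pow_of_le_one hρ0.le hρ1.le
        rw [Nat.succ_mul, hj]
        exact Nat.add_le_add_left hsN.le _
      have h2 : ρ ^ ((m + 1) * N) = (1/2) ^ (m + 1) := by
        rw [mul_comm, pow_mul, hρN]
      have h3 : ((1:ℝ)/2) ^ (m+1) = (1/2) * (1/2) ^ m := by ring
      rw [h2, h3] at h1
      linarith
    calc ‖dflow f k j ξ - dflow f k j ζ‖
        ≤ L ^ N * ((1/2) ^ m * ‖ξ - ζ‖) := hmain
      _ ≤ L ^ N * ((2 * ρ ^ j) * ‖ξ - ζ‖) := by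
          have h5 : (0:ℝ) < L ^ N := by positivity
          gcongr
      _ = (2 * L ^ N) * ‖ξ - ζ‖ * ρ ^ j := by ring
  -- bound on D
  obtain ⟨M, hM⟩ := hD.exists_bound_of_continuousOn continuousOn_id
  set M1 : ℝ := max M 1 with hM1def
  have hM1 : (1:ℝ) ≤ M1 := le_max_right _ _
  have hM1' : ∀ x ∈ D, ‖x‖ ≤ M1 := fun x hx => (hM x hx).trans (le_max_left _ _)
  -- time to reach the δ-ball
  obtain ⟨T, hT⟩ := exists_pow_lt_of_lt_one (x := δ / (dt * M1))
    (div_pos hδ0 (by positivity)) hlam1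
  have hreach : ∀ k (ξ : EuclideanSpace ℝ (Fin n)), ξ ∈ D →
      dflow f k T ξ ∈ Metric.ball (0:EuclideanSpace ℝ (Fin n)) δ := by
    intro k ξ hξ
    rw [mem_ball_zero_iff]
    calc ‖dflow f k T ξ‖ ≤ dt * ‖ξ‖ * lam ^ T := hESf k T ξ hξ
      _ ≤ dt * M1 * lam ^ T := by
          gcongr
          exact hM1' ξ hξ
      _ < dt * M1 * (δ / (dt * M1)) := by
          have : (0:ℝ) < dt * M1 := by positivity
          gcongr
      _ = δ := by field_simp
  -- the final constants
  refine ⟨2 * L ^ (N + T) / ρ ^ T, ρ, by positivity, hρ0, hρ1, ?_⟩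
  intro k₀ x y hxD hyD hx hy k hk
  set j : ℕ := k - k₀ with hjdef
  have hkj : k = k₀ + j := by omega
  have hxk : x k = dflow f k₀ j (x k₀) := by
    rw [hkj]; exact sol_eq_dflow f x k₀ hx j
  have hyk : y k = dflow f k₀ j (y k₀) := by
    rw [hkj]; exact sol_eq_dflow f y k₀ hy j
  rw [hxk, hyk]
  set ξ := x k₀
  set ζ := y k₀
  have hρT : (0:ℝ) < ρ ^ T := by positivity
  have hlipT : ∀ (p q : EuclideanSpace ℝ (Fin n)), p ∈ D → q ∈ D → ∀ i, i ≤ T →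
      ‖dflow f k₀ i p - dflow f k₀ i q‖ ≤ L ^ T * ‖p - q‖ := by
    intro p q hp hq i hi
    refine (dflow_lip f hLf hinv hLip hp hq k₀ i).trans ?_
    gcongr
    have h1 : Lf ^ i ≤ L ^ i := by
      gcongr
      exact le_max_left _ _
    exact h1.trans (pow_le_pow_right₀ hL1 hi)
  rcases le_or_gt T j with hTj | hTj
  · -- large time: use local incremental stability after time T
    have hjsplit : j = T + (j - T) := by omega
    have e1 : dflow f k₀ j ξ = dflow f (k₀ + T) (j - T) (dflow f k₀ T ξ) := by
      conv_lhs => rw [hjsplit]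
      rw [dflow_add]
    have e2 : dflow f k₀ j ζ = dflow f (k₀ + T) (j - T) (dflow f k₀ T ζ) := by
      conv_lhs => rw [hjsplit]
      rw [dflow_add]
    have hρj : ρ ^ j = ρ ^ (j - T) * ρ ^ T := by
      rw [← pow_add]
      congr 1
      omega
    calc ‖dflow f k₀ j ξ - dflow f k₀ j ζ‖
        = ‖dflow f (k₀ + T) (j - T) (dflow f k₀ T ξ)
          - dflow f (k₀ + T) (j - T) (dflow f k₀ T ζ)‖ := by rw [e1, e2]
      _ ≤ (2 * L ^ N) * ‖dflow f k₀ T ξ - dflow f k₀ T ζ‖ * ρ ^ (j - T) :=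
          hlocal (k₀ + T) (j - T) _ (hreach k₀ ξ hxD) _ (hreach k₀ ζ hyD)
      _ ≤ (2 * L ^ N) * (L ^ T * ‖ξ - ζ‖) * ρ ^ (j - T) := by
          have h5 : (0:ℝ) < L ^ N := by positivity
          gcongr
          exact hlipT ξ ζ hxD hyD T le_rfl
      _ = 2 * L ^ (N + T) / ρ ^ T * ‖ξ - ζ‖ * ρ ^ j := by
          rw [hρj, pow_add]
          field_simp
  · -- small time: use the Lipschitz bound
    have hρjT : ρ ^ T ≤ ρ ^ j := pow_le_pow_of_le_one hρ0.le hρ1.le hTj.le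
    have hLNT : (0:ℝ) < L ^ (N + T) := by positivity
    have hLTle : L ^ T ≤ 2 * L ^ (N + T) := by
      have h1 : L ^ T ≤ L ^ (N + T) := pow_le_pow_right₀ hL1 (by omega)
      linarith
    calc ‖dflow f k₀ j ξ - dflow f k₀ j ζ‖
        ≤ L ^ T * ‖ξ - ζ‖ := hlipT ξ ζ hxD hyD j hTj.le
      _ ≤ (2 * L ^ (N + T) / ρ ^ T * ρ ^ j) * ‖ξ - ζ‖ := by
          gcongr ?_ * ‖ξ - ζ‖
          calc L ^ T ≤ 2 * L ^ (N + T) := hLTle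
            _ = 2 * L ^ (N + T) / ρ ^ T * ρ ^ T := by field_simp
            _ ≤ 2 * L ^ (N + T) / ρ ^ T * ρ ^ j := by
                have : (0:ℝ) ≤ 2 * L ^ (N + T) / ρ ^ T := by positivity
                gcongr
      _ = 2 * L ^ (N + T) / ρ ^ T * ‖ξ - ζ‖ * ρ ^ j := by ring
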